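/- Let X be a finite connected graph and let Q be the simple random walk kernel with stationary measure π(x) = d_x / Σ_v d_v. Assume the Bakry–Émery pointwise gradient estimate with constant κ > 0 holds: for all f : X → ℝ, all x ∈ X and all t ≥ 0, Γ(P_t f)(x) ≤ e^{−2κt} · P_t Γ(f)(x). Then the combinatorial diameter satisfies diam(X) ≤ 2/κ. -/

import Mathlib

/-- The logarithmic mean: `θ(a,b) = (a-b)/(log a - log b)` for distinct positive `a,b`,
`θ(a,a) = a`, and `θ(a,b) = 0` when `a = 0` or `b = 0`. -/
noncomputable def logMean (a b : ℝ) : ℝ :=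
  if a = 0 ∨ b = 0 then 0
  else if a = b then a
  else (a - b) / (Real.log a - Real.log b)

/-- The discrete Laplacian `Δf(x) = Σ_y (f(y)-f(x)) Q(x,y)`. -/
noncomputable def lap {X : Type*} [Fintype X] (Q : X → X → ℝ) (f : X → ℝ) (x : X) : ℝ :=
  ∑ y, (f y - f x) * Q x y

/-- The heat semigroup `P_t = e^{tΔ}`, realized via the matrix exponential of `t•(Q - I)`.
(When `Σ_y Q(x,y) = 1`, the matrix `Q - I` acts on functions exactly as `Δ` does.) -/
noncomputable def heat {X : Type*} [Fintype X] [DecidableEq X] (Q : X → X → ℝ) (t : ℝ)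
    (f : X → ℝ) : X → ℝ :=
  (NormedSpace.exp (t • (Matrix.of fun x y => Q x y - if x = y then (1 : ℝ) else 0))).mulVec f

/-- The carré du champ operator `Γ(f)(x) = Σ_y (f(y)-f(x))² Q(x,y)`. -/
noncomputable def gam {X : Type*} [Fintype X] (Q : X → X → ℝ) (f : X → ℝ) (x : X) : ℝ :=
  ∑ y, (f y - f x) ^ 2 * Q x y

section Aux

variable {X : Type*} [Fintype X] [DecidableEq X]

/-- The generator matrix `Q - I`. -/
noncomputable def genM (Q : X → X → ℝ) : Matrix X X ℝ :=
  Matrix.of fun x y => Q x y - if x = y then (1 : ℝ) else 0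

lemma heat_def' (Q : X → X → ℝ) (t : ℝ) (f : X → ℝ) :
    heat Q t f = (NormedSpace.exp (t • genM Q)).mulVec f := rfl

/-- `B ↦ B.mulVec f x` as a linear map. -/
noncomputable def mvLM (f : X → ℝ) (x : X) : Matrix X X ℝ →ₗ[ℝ] ℝ where
  toFun B := B.mulVec f x
  map_add' A B := by simp [Matrix.add_mulVec]
  map_smul' c A := by simp [Matrix.smul_mulVec]

lemma mulVec_exp_tsum (A : Matrix X X ℝ) (f : X → ℝ) (x : X) :
    (NormedSpace.exp A).mulVec f x
      = ∑' n : ℕ, ((n.factorial : ℝ)⁻¹ * ((A ^ n).mulVec f x)) := by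
  letI : SeminormedRing (Matrix X X ℝ) := Matrix.linftyOpSemiNormedRing
  letI : NormedRing (Matrix X X ℝ) := Matrix.linftyOpNormedRing
  letI : NormedAlgebra ℝ (Matrix X X ℝ) := Matrix.linftyOpNormedAlgebra
  have := ((mvLM f x).toContinuousLinearMap : Matrix X X ℝ →L[ℝ] ℝ).map_tsum
    (NormedSpace.expSeries_summable' (𝕂 := ℝ) A)
  rw [NormedSpace.exp_eq_tsum ℝ]
  simpa [mvLM, Matrix.smul_mulVec] using this

lemma exp_entry_tsum (A : Matrix X X ℝ) (x y : X) :
    NormedSpace.exp A x y = ∑' n : ℕ, ((n.factorial : ℝ)⁻¹ * (A ^ n) x y) := by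
  letI : SeminormedRing (Matrix X X ℝ) := Matrix.linftyOpSemiNormedRing
  letI : NormedRing (Matrix X X ℝ) := Matrix.linftyOpNormedRing
  letI : NormedAlgebra ℝ (Matrix X X ℝ) := Matrix.linftyOpNormedAlgebra
  let L : Matrix X X ℝ →ₗ[ℝ] ℝ :=
    { toFun := fun B => B x y, map_add' := fun _ _ => rfl, map_smul' := fun _ _ => rfl }
  have := (L.toContinuousLinearMap : Matrix X X ℝ →L[ℝ] ℝ).map_tsum
    (NormedSpace.expSeries_summable' (𝕂 := ℝ) A)
  rw [NormedSpace.exp_eq_tsum ℝ]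
  simp [L] at this
  exact this

lemma pow_entry_nonneg {A : Matrix X X ℝ} (hA : ∀ x y, 0 ≤ A x y) (n : ℕ) :
    ∀ x y, 0 ≤ (A ^ n) x y := by
  induction n with
  | zero => intro x y; by_cases h : x = y <;> simp [Matrix.one_apply, h]
  | succ n ih =>
    intro x y
    rw [pow_succ, Matrix.mul_apply]
    exact Finset.sum_nonneg fun k _ => mul_nonneg (ih x k) (hA k y)

lemma exp_entry_nonneg {A : Matrix X X ℝ} (hA : ∀ x y, 0 ≤ A x y) (x y : X) :
    0 ≤ NormedSpace.exp A x y := by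
  rw [exp_entry_tsum]
  refine tsum_nonneg fun n => mul_nonneg (by positivity) (pow_entry_nonneg hA n x y)

lemma exp_smul_one (c : ℝ) :
    NormedSpace.exp (c • (1 : Matrix X X ℝ)) = Real.exp c • (1 : Matrix X X ℝ) := by
  ext x y
  rw [exp_entry_tsum]
  have hpow : ∀ n : ℕ, (c • (1 : Matrix X X ℝ)) ^ n = (c ^ n) • (1 : Matrix X X ℝ) := by
    intro n; rw [smul_pow, one_pow]
  have hterm : ∀ n : ℕ, ((n.factorial : ℝ)⁻¹ * ((c • (1 : Matrix X X ℝ)) ^ n) x y)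
      = ((n.factorial : ℝ)⁻¹ * c ^ n) * (if x = y then (1:ℝ) else 0) := by
    intro n
    rw [hpow]
    by_cases h : x = y <;> simp [Matrix.one_apply, h, mul_assoc]
  rw [tsum_congr hterm, tsum_mul_right]
  have hexp : ∑' n : ℕ, ((n.factorial : ℝ)⁻¹ * c ^ n) = Real.exp c := by
    rw [Real.exp_eq_exp_ℝ, NormedSpace.exp_eq_tsum ℝ]
    simp [smul_eq_mul]
  rw [hexp]
  by_cases h : x = y <;> simp [Matrix.one_apply, h]

/-- The heat kernel has nonnegative entries for `t ≥ 0`. -/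
lemma heat_kernel_nonneg {Q : X → X → ℝ} (hQpos : ∀ x y, 0 ≤ Q x y) {t : ℝ} (ht : 0 ≤ t)
    (x y : X) : 0 ≤ NormedSpace.exp (t • genM Q) x y := by
  have hsplit : t • genM Q = t • (Matrix.of Q : Matrix X X ℝ) + (-t) • (1 : Matrix X X ℝ) := by
    ext x y
    by_cases h : x = y <;> simp [genM, Matrix.one_apply, h, smul_sub] <;> ring
  have hcomm : Commute (t • (Matrix.of Q : Matrix X X ℝ)) ((-t) • (1 : Matrix X X ℝ)) := by
    simp [Commute, SemiconjBy]
  have hexp := Matrix.exp_add_of_commute _ _ hcomm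
  rw [hsplit, hexp]
  have h2 : NormedSpace.exp ((-t) • (1 : Matrix X X ℝ))
      = Real.exp (-t) • (1 : Matrix X X ℝ) := exp_smul_one (-t)
  rw [h2, Matrix.mul_apply]
  refine Finset.sum_nonneg fun k _ => ?_
  have hnn : 0 ≤ NormedSpace.exp (t • (Matrix.of Q : Matrix X X ℝ)) x k :=
    exp_entry_nonneg (fun a b => by
      simpa using mul_nonneg ht (hQpos a b)) x k
  have : 0 ≤ (Real.exp (-t) • (1 : Matrix X X ℝ)) k y := by
    by_cases h : k = y <;> simp [Matrix.one_apply, h, (Real.exp_pos _).le]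
  exact mul_nonneg hnn this

lemma genM_mulVec_one {Q : X → X → ℝ} (hrow : ∀ x, ∑ y, Q x y = 1) :
    (genM Q).mulVec (fun _ => (1 : ℝ)) = 0 := by
  funext x
  simp only [Matrix.mulVec, dotProduct, genM, Matrix.of_apply, mul_one]
  rw [Finset.sum_sub_distrib, hrow]
  simp

lemma heat_one {Q : X → X → ℝ} (hrow : ∀ x, ∑ y, Q x y = 1) (t : ℝ) (x : X) :
    heat Q t (fun _ => (1 : ℝ)) x = 1 := by
  rw [heat_def', mulVec_exp_tsum]
  have hpow : ∀ n : ℕ, ((t • genM Q) ^ n).mulVec (fun _ => (1 : ℝ)) x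
      = if n = 0 then 1 else 0 := by
    intro n
    induction n with
    | zero => simp [Matrix.one_mulVec]
    | succ n ih =>
      have : (t • genM Q) ^ (n + 1) = (t • genM Q) ^ n * (t • genM Q) := pow_succ _ _
      rw [this]
      have h0 : (t • genM Q).mulVec (fun _ => (1 : ℝ)) = 0 := by
        rw [Matrix.smul_mulVec, genM_mulVec_one hrow, smul_zero]
      rw [← Matrix.mulVec_mulVec, h0]
      simp [Matrix.mulVec_zero]
  have : ∀ n : ℕ, ((n.factorial : ℝ)⁻¹ * ((t • genM Q) ^ n).mulVec (fun _ => (1 : ℝ)) x)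
      = if n = 0 then 1 else 0 := by
    intro n
    rw [hpow]
    by_cases h : n = 0 <;> simp [h]
  rw [tsum_congr this, tsum_eq_single 0 (fun n hn => by simp [hn])]
  simp

lemma heat_nonneg {Q : X → X → ℝ} (hQpos : ∀ x y, 0 ≤ Q x y) {t : ℝ} (ht : 0 ≤ t)
    {g : X → ℝ} (hg : ∀ y, 0 ≤ g y) (x : X) : 0 ≤ heat Q t g x := by
  rw [heat_def']
  exact Finset.sum_nonneg fun y _ => mul_nonneg (heat_kernel_nonneg hQpos ht x y) (hg y)

lemma heat_le_one {Q : X → X → ℝ} (hQpos : ∀ x y, 0 ≤ Q x y)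
    (hrow : ∀ x, ∑ y, Q x y = 1) {t : ℝ} (ht : 0 ≤ t)
    {g : X → ℝ} (hg : ∀ y, g y ≤ 1) (x : X) : heat Q t g x ≤ 1 := by
  have hsub : heat Q t (fun y => 1 - g y) x = heat Q t (fun _ => (1 : ℝ)) x - heat Q t g x := by
    simp only [heat_def']
    have : (fun y => 1 - g y) = (fun _ : X => (1 : ℝ)) - g := by funext y; simp
    rw [this, Matrix.mulVec_sub]
    simp
  have h0 : 0 ≤ heat Q t (fun y => 1 - g y) x :=
    heat_nonneg hQpos ht (fun y => by linarith [hg y]) x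
  rw [hsub, heat_one hrow] at h0
  linarith

lemma hasDerivAt_heat (Q : X → X → ℝ) (hrow : ∀ x, ∑ y, Q x y = 1) (f : X → ℝ) (z : X)
    (t : ℝ) : HasDerivAt (fun s : ℝ => heat Q s f z) (lap Q (heat Q t f) z) t := by
  letI : SeminormedRing (Matrix X X ℝ) := Matrix.linftyOpSemiNormedRing
  letI : NormedRing (Matrix X X ℝ) := Matrix.linftyOpNormedRing
  letI : NormedAlgebra ℝ (Matrix X X ℝ) := Matrix.linftyOpNormedAlgebra
  have h1 : HasDerivAt (fun s : ℝ => NormedSpace.exp (s • genM Q))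
      (genM Q * NormedSpace.exp (t • genM Q)) t := hasDerivAt_exp_smul_const' (genM Q) t
  have h2 := ((mvLM f z).toContinuousLinearMap.hasFDerivAt).comp_hasDerivAt t h1
  have h3 : (mvLM f z) (genM Q * NormedSpace.exp (t • genM Q)) = lap Q (heat Q t f) z := by
    show (genM Q * NormedSpace.exp (t • genM Q)).mulVec f z = _
    rw [← Matrix.mulVec_mulVec]
    have : (NormedSpace.exp (t • genM Q)).mulVec f = heat Q t f := rfl
    rw [this]
    simp only [Matrix.mulVec, dotProduct, genM, Matrix.of_apply, lap]
    have e1 : ∀ y : X, (Q z y - if z = y then (1:ℝ) else 0) * heat Q t f y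
        = Q z y * heat Q t f y - (if z = y then (1:ℝ) else 0) * heat Q t f y := by
      intro y; ring
    have e2 : ∀ y : X, (heat Q t f y - heat Q t f z) * Q z y
        = Q z y * heat Q t f y - heat Q t f z * Q z y := by intro y; ring
    rw [Finset.sum_congr rfl fun y _ => e1 y, Finset.sum_sub_distrib,
      Finset.sum_congr rfl fun y _ => e2 y, Finset.sum_sub_distrib,
      ← Finset.mul_sum, hrow, mul_one]
    simp
  rw [← h3]
  exact h2

lemma lap_sq_le_gam {Q : X → X → ℝ} (hQpos : ∀ x y, 0 ≤ Q x y)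
    (hrow : ∀ x, ∑ y, Q x y = 1) (g : X → ℝ) (z : X) :
    (lap Q g z) ^ 2 ≤ gam Q g z := by
  have key := Finset.sum_mul_sq_le_sq_mul_sq Finset.univ
    (fun y => (g y - g z) * Real.sqrt (Q z y)) (fun y => Real.sqrt (Q z y))
  have h1 : ∀ y : X, ((g y - g z) * Real.sqrt (Q z y)) * Real.sqrt (Q z y)
      = (g y - g z) * Q z y := by
    intro y
    rw [mul_assoc, Real.mul_self_sqrt (hQpos z y)]
  have h2 : ∀ y : X, ((g y - g z) * Real.sqrt (Q z y)) ^ 2 = (g y - g z) ^ 2 * Q z y := by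
    intro y
    rw [mul_pow, Real.sq_sqrt (hQpos z y)]
  have h3 : ∀ y : X, (Real.sqrt (Q z y)) ^ 2 = Q z y := fun y => Real.sq_sqrt (hQpos z y)
  rw [Finset.sum_congr rfl fun y _ => h1 y, Finset.sum_congr rfl fun y _ => h2 y,
    Finset.sum_congr rfl fun y _ => h3 y, hrow, mul_one] at key
  exact key

lemma gam_nonneg {Q : X → X → ℝ} (hQpos : ∀ x y, 0 ≤ Q x y) (g : X → ℝ) (x : X) :
    0 ≤ gam Q g x :=
  Finset.sum_nonneg fun y _ => mul_nonneg (sq_nonneg _) (hQpos x y)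

lemma continuous_heat (Q : X → X → ℝ) (f : X → ℝ) (y : X) :
    Continuous fun t : ℝ => heat Q t f y := by
  letI : SeminormedRing (Matrix X X ℝ) := Matrix.linftyOpSemiNormedRing
  letI : NormedRing (Matrix X X ℝ) := Matrix.linftyOpNormedRing
  letI : NormedAlgebra ℝ (Matrix X X ℝ) := Matrix.linftyOpNormedAlgebra
  have h1 : Continuous fun t : ℝ => NormedSpace.exp (t • genM Q) :=
    continuous_iff_continuousAt.2 fun t => (hasDerivAt_exp_smul_const' (genM Q) t).continuousAt
  have h2 : Continuous ((mvLM f y).toContinuousLinearMap : Matrix X X ℝ →L[ℝ] ℝ) :=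
    (mvLM f y).toContinuousLinearMap.continuous
  exact h2.comp h1

/-- Telescoping along a walk. -/
lemma walk_abs_le {V : Type*} {G : SimpleGraph V} {u v : V} (p : G.Walk u v) (g : V → ℝ)
    (C : ℝ) (hC : 0 ≤ C) (hedge : ∀ a b, G.Adj a b → |g b - g a| ≤ C) :
    |g v - g u| ≤ p.length * C := by
  induction p with
  | nil => simp
  | @cons a w v h q ih =>
    have h1 : |g v - g a| ≤ |g v - g w| + |g w - g a| := by
      have : g v - g a = (g v - g w) + (g w - g a) := by ring
      rw [this]; exact abs_add_le _ _
    have h2 := hedge a w h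
    calc |g v - g a| ≤ |g v - g w| + |g w - g a| := h1
      _ ≤ q.length * C + C := add_le_add ih h2
      _ = (q.length + 1) * C := by ring
      _ = (q.cons h).length * C := by
          rw [SimpleGraph.Walk.length_cons]; push_cast; ring

end Aux

/-- **Sharp diameter bound from the Bakry–Émery gradient estimate**: if the simple random
walk on a finite connected graph satisfies `Γ(P_t f)(x) ≤ e^{-2κt}·P_tΓ(f)(x)` with
`κ > 0`, then `diam(X) ≤ 2/κ`. -/
theorem diameter_bound_bakry_emery
    {X : Type*} [Fintype X] [DecidableEq X]
    (G : SimpleGraph X) [DecidableRel G.Adj] (hconn : G.Connected)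
    (Q : X → X → ℝ) (π : X → ℝ) (κ : ℝ) (hκ : 0 < κ)
    (hQ : ∀ x y, Q x y = if G.Adj x y then ((G.degree x : ℝ))⁻¹ else 0)
    (hπ : ∀ x, π x = (G.degree x : ℝ) / ∑ v, (G.degree v : ℝ))
    (hBE : ∀ f : X → ℝ, ∀ x : X, ∀ t : ℝ, 0 ≤ t →
      gam Q (heat Q t f) x ≤ Real.exp (-2 * κ * t) * heat Q t (gam Q f) x) :
    (G.diam : ℝ) ≤ 2 / κ := by
  have hne : Nonempty X := hconn.nonempty
  obtain ⟨u, v, huv⟩ := SimpleGraph.exists_dist_eq_diam (G := G)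
  by_cases hd0 : G.diam = 0
  · rw [hd0, Nat.cast_zero]; positivity
  -- the graph is nontrivial, so every degree is positive
  have hnontriv : Nontrivial X := SimpleGraph.nontrivial_of_diam_ne_zero hd0
  have hdegpos : ∀ x : X, 0 < G.degree x := by
    intro x
    rw [SimpleGraph.degree_pos_iff_exists_adj]
    obtain ⟨y, hy⟩ := exists_ne x
    obtain ⟨p⟩ := hconn x y
    cases p with
    | nil => exact absurd rfl hy.symm
    | cons h q => exact ⟨_, h⟩
  have hQpos : ∀ x y, 0 ≤ Q x y := by
    intro x y
    rw [hQ]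
    split
    · positivity
    · exact le_refl 0
  have hrow : ∀ x, ∑ y, Q x y = 1 := by
    intro x
    simp only [hQ]
    rw [Finset.sum_ite, Finset.sum_const, Finset.sum_const_zero, add_zero,
      ← SimpleGraph.neighborFinset_eq_filter, SimpleGraph.card_neighborFinset_eq_degree,
      nsmul_eq_mul]
    have : ((G.degree x : ℝ)) ≠ 0 := by
      have := hdegpos x
      positivity
    field_simp
  -- the test function: distance to u
  set f : X → ℝ := fun z => (G.dist u z : ℝ) with hf
  have hgam : ∀ x, gam Q f x ≤ 1 := by
    intro x
    have hterm : ∀ y : X, (f y - f x) ^ 2 * Q x y ≤ Q x y := by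
      intro y
      by_cases hadj : G.Adj x y
      · have hxy : G.dist x y = 1 := SimpleGraph.dist_eq_one_iff_adj.mpr hadj
        have hyx : G.dist y x = 1 := SimpleGraph.dist_eq_one_iff_adj.mpr hadj.symm
        have h1 : G.dist u y ≤ G.dist u x + 1 := by
          have := hconn.dist_triangle (u := u) (v := x) (w := y)
          omega
        have h2 : G.dist u x ≤ G.dist u y + 1 := by
          have := hconn.dist_triangle (u := u) (v := y) (w := x)
          omega
        have habs : (f y - f x) ^ 2 ≤ 1 := by
          have hb : |f y - f x| ≤ 1 := by
            rw [abs_le]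
            constructor
            · simp only [hf]
              push_cast
              have : (G.dist u y : ℝ) + 1 ≥ (G.dist u x : ℝ) := by exact_mod_cast h2
              linarith
            · simp only [hf]
              push_cast
              have : (G.dist u y : ℝ) ≤ (G.dist u x : ℝ) + 1 := by exact_mod_cast h1
              linarith
          calc (f y - f x) ^ 2 = |f y - f x| ^ 2 := (sq_abs _).symm
            _ ≤ 1 ^ 2 := by
                exact pow_le_pow_left₀ (abs_nonneg _) hb 2
            _ = 1 := one_pow 2
        calc (f y - f x) ^ 2 * Q x y ≤ 1 * Q x y :=
              mul_le_mul_of_nonneg_right habs (hQpos x y)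
          _ = Q x y := one_mul _
      · have : Q x y = 0 := by rw [hQ]; simp [hadj]
        rw [this]
        simp
    calc gam Q f x ≤ ∑ y, Q x y := Finset.sum_le_sum fun y _ => hterm y
      _ = 1 := hrow x
  -- uniform decay of the carré du champ of the evolved function
  have hgamle : ∀ z : X, ∀ T : ℝ, 0 ≤ T →
      gam Q (heat Q T f) z ≤ Real.exp (-(κ * T)) ^ 2 := by
    intro z T hT
    have h2 := hBE f z T hT
    have h3 : heat Q T (gam Q f) z ≤ 1 := heat_le_one hQpos hrow hT hgam z
    have h5 : Real.exp (-2 * κ * T) = Real.exp (-(κ * T)) ^ 2 := by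
      rw [sq, ← Real.exp_add]
      ring_nf
    calc gam Q (heat Q T f) z ≤ Real.exp (-2 * κ * T) * heat Q T (gam Q f) z := h2
      _ ≤ Real.exp (-2 * κ * T) * 1 := mul_le_mul_of_nonneg_left h3 (Real.exp_pos _).le
      _ = Real.exp (-(κ * T)) ^ 2 := by rw [mul_one, h5]
  -- pointwise decay of the Laplacian of the evolved function
  have hdecay : ∀ z : X, ∀ t : ℝ, 0 ≤ t →
      |lap Q (heat Q t f) z| ≤ Real.exp (-(κ * t)) := by
    intro z t ht
    have h1 : (lap Q (heat Q t f) z) ^ 2 ≤ Real.exp (-(κ * t)) ^ 2 :=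
      (lap_sq_le_gam hQpos hrow _ z).trans (hgamle z t ht)
    have := Real.sqrt_le_sqrt h1
    rwa [Real.sqrt_sq_eq_abs, Real.sqrt_sq (Real.exp_pos _).le] at this
  -- fundamental theorem of calculus: heat flow moves values by at most 1/κ
  have hFTC : ∀ z : X, ∀ T : ℝ, 0 ≤ T → |heat Q T f z - f z| ≤ 1 / κ := by
    intro z T hT
    have hcont : Continuous fun t : ℝ => lap Q (heat Q t f) z := by
      unfold lap
      exact continuous_finset_sum _ fun y _ =>
        ((continuous_heat Q f y).sub (continuous_heat Q f z)).mul continuous_const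
    have hint : IntervalIntegrable (fun t => lap Q (heat Q t f) z)
        MeasureTheory.volume 0 T := hcont.intervalIntegrable _ _
    have heq : (∫ t in (0:ℝ)..T, lap Q (heat Q t f) z) = heat Q T f z - heat Q 0 f z :=
      intervalIntegral.integral_eq_sub_of_hasDerivAt
        (fun t _ => hasDerivAt_heat Q hrow f z t) hint
    have h0 : heat Q 0 f z = f z := by
      rw [heat_def', zero_smul, NormedSpace.exp_zero, Matrix.one_mulVec]
    have hgint : IntervalIntegrable (fun t : ℝ => Real.exp (-(κ * t)))
        MeasureTheory.volume 0 T :=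
      (Real.continuous_exp.comp (continuous_const.mul continuous_id).neg).intervalIntegrable _ _
    have hbound : |∫ t in (0:ℝ)..T, lap Q (heat Q t f) z|
        ≤ |∫ t in (0:ℝ)..T, Real.exp (-(κ * t))| := by
      have hae : ∀ᵐ t ∂(MeasureTheory.volume.restrict (Set.uIoc (0:ℝ) T)),
          ‖lap Q (heat Q t f) z‖ ≤ Real.exp (-(κ * t)) := by
        filter_upwards [MeasureTheory.ae_restrict_mem measurableSet_uIoc] with t ht
        rw [Set.uIoc_of_le hT] at ht
        rw [Real.norm_eq_abs]
        exact hdecay z t ht.1.le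
      simpa [Real.norm_eq_abs] using
        intervalIntegral.norm_integral_le_abs_of_norm_le hae hgint
    have hIval : (∫ t in (0:ℝ)..T, Real.exp (-(κ * t)))
        = (1 - Real.exp (-(κ * T))) / κ := by
      have hd : ∀ t ∈ Set.uIcc (0:ℝ) T,
          HasDerivAt (fun s : ℝ => -(Real.exp (-(κ * s))) / κ) (Real.exp (-(κ * t))) t := by
        intro t _
        have h1 : HasDerivAt (fun s : ℝ => -(κ * s)) (-κ) t := by
          simpa [neg_mul] using (hasDerivAt_id t).const_mul (-κ)
        have h2 := (Real.hasDerivAt_exp (-(κ * t))).comp t h1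
        have h3 := (h2.neg).div_const κ
        refine h3.congr_deriv ?_
        field_simp
      rw [intervalIntegral.integral_eq_sub_of_hasDerivAt hd hgint]
      rw [mul_zero, neg_zero, Real.exp_zero]
      field_simp
      ring
    have hIle : |∫ t in (0:ℝ)..T, Real.exp (-(κ * t))| ≤ 1 / κ := by
      rw [hIval]
      have he1 : Real.exp (-(κ * T)) ≤ 1 := by
        have := Real.exp_le_exp.mpr (show -(κ * T) ≤ 0 by nlinarith)
        rwa [Real.exp_zero] at this
      have he0 : (0:ℝ) < Real.exp (-(κ * T)) := Real.exp_pos _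
      rw [abs_of_nonneg (div_nonneg (by linarith) hκ.le)]
      gcongr
      linarith
    rw [← h0, ← heq]
    exact hbound.trans hIle
  -- the evolved function has small increments across edges
  set N : ℝ := (Fintype.card X : ℝ) with hN
  have hNpos : 0 < N := by
    rw [hN]
    exact_mod_cast Fintype.card_pos
  have hedge : ∀ T : ℝ, 0 ≤ T → ∀ a b : X, G.Adj a b →
      |heat Q T f b - heat Q T f a| ≤ Real.sqrt N * Real.exp (-(κ * T)) := by
    intro T hT a b hab
    have hQab : Q a b = ((G.degree a : ℝ))⁻¹ := by rw [hQ]; simp [hab]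
    have hdeg : (0:ℝ) < (G.degree a : ℝ) := by exact_mod_cast hdegpos a
    have hdegle : (G.degree a : ℝ) ≤ N := by
      rw [hN]
      exact_mod_cast (G.degree_lt_card_verts a).le
    have hterm : (heat Q T f b - heat Q T f a) ^ 2 * Q a b ≤ gam Q (heat Q T f) a := by
      exact Finset.single_le_sum
        (f := fun y => (heat Q T f y - heat Q T f a) ^ 2 * Q a y)
        (fun y _ => mul_nonneg (sq_nonneg _) (hQpos a y)) (Finset.mem_univ b)
    have h4 := (hterm.trans (hgamle a T hT))
    have hsq : (heat Q T f b - heat Q T f a) ^ 2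
        ≤ N * Real.exp (-(κ * T)) ^ 2 := by
      rw [hQab] at h4
      have h5 : (heat Q T f b - heat Q T f a) ^ 2
          ≤ (G.degree a : ℝ) * Real.exp (-(κ * T)) ^ 2 := by
        have := mul_le_mul_of_nonneg_left h4 hdeg.le
        rw [mul_comm ((G.degree a : ℝ)) _, mul_assoc,
          inv_mul_cancel₀ (ne_of_gt hdeg), mul_one] at this
        linarith [this]
      exact h5.trans (mul_le_mul_of_nonneg_right hdegle (sq_nonneg _))
    have hsq2 : (heat Q T f b - heat Q T f a) ^ 2
        ≤ (Real.sqrt N * Real.exp (-(κ * T))) ^ 2 := by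
      rw [mul_pow, Real.sq_sqrt hNpos.le]
      exact hsq
    have := Real.sqrt_le_sqrt hsq2
    rwa [Real.sqrt_sq_eq_abs, Real.sqrt_sq
      (mul_nonneg (Real.sqrt_nonneg _) (Real.exp_pos _).le)] at this
  -- put everything together along a geodesic
  obtain ⟨p, hp⟩ := hconn.exists_walk_length_eq_dist u v
  have hfv : f v = (G.dist u v : ℝ) := rfl
  have hfu : f u = 0 := by
    simp only [hf, SimpleGraph.dist_self, Nat.cast_zero]
  have hkey : ∀ T : ℝ, 0 ≤ T → (G.dist u v : ℝ)
      ≤ 2 / κ + (G.dist u v : ℝ) * (Real.sqrt N * Real.exp (-(κ * T))) := by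
    intro T hT
    have h1 := abs_le.mp (hFTC u T hT)
    have h2 := abs_le.mp (hFTC v T hT)
    have h3 := walk_abs_le p (heat Q T f) (Real.sqrt N * Real.exp (-(κ * T)))
      (mul_nonneg (Real.sqrt_nonneg _) (Real.exp_pos _).le)
      (fun a b hab => hedge T hT a b hab)
    rw [hp] at h3
    have h3' := abs_le.mp h3
    have hD : (G.dist u v : ℝ) = f v - f u := by rw [hfv, hfu]; ring
    have e1 : heat Q T f u - f u ≤ 1 / κ := h1.2
    have e1' : -(1 / κ) ≤ heat Q T f u - f u := h1.1
    have e2 : heat Q T f v - f v ≤ 1 / κ := h2.2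
    have e2' : -(1 / κ) ≤ heat Q T f v - f v := h2.1
    have e3 : heat Q T f v - heat Q T f u
        ≤ (G.dist u v : ℝ) * (Real.sqrt N * Real.exp (-(κ * T))) := h3'.2
    have h2κ : (2:ℝ) / κ = 1 / κ + 1 / κ := by ring
    linarith
  -- pass to the limit T → ∞
  have hlim : Filter.Tendsto
      (fun T : ℝ => 2 / κ + (G.dist u v : ℝ) * (Real.sqrt N * Real.exp (-(κ * T))))
      Filter.atTop (nhds (2 / κ)) := by
    have h1 : Filter.Tendsto (fun T : ℝ => κ * T) Filter.atTop Filter.atTop :=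
      Filter.Tendsto.const_mul_atTop hκ Filter.tendsto_id
    have h2 : Filter.Tendsto (fun T : ℝ => Real.exp (-(κ * T))) Filter.atTop (nhds 0) :=
      Real.tendsto_exp_neg_atTop_nhds_zero.comp h1
    have h3 : Filter.Tendsto
        (fun T : ℝ => (G.dist u v : ℝ) * (Real.sqrt N * Real.exp (-(κ * T))))
        Filter.atTop (nhds 0) := by
      have := (h2.const_mul (Real.sqrt N)).const_mul ((G.dist u v : ℝ))
      simpa using this
    have := Filter.Tendsto.add (tendsto_const_nhds (x := (2:ℝ)/κ) (f := Filter.atTop)) h3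
    simpa using this
  have hfinal : (G.dist u v : ℝ) ≤ 2 / κ :=
    ge_of_tendsto hlim (Filter.eventually_atTop.mpr ⟨0, fun T hT => hkey T hT⟩)
  rw [← huv]
  exact hfinal
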